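/- Let G be a finite group with trivial-intersection Sylow p-subgroups, Q ∈ Syl_p(G), z ∈ Q \ {1}, and let x' = x^g for some x ∈ Q \ {1} with g ∉ N_G(Q). Then p does not divide |C_G(z) ∩ C_G(x')|. -/

import Mathlib

open Subgroup Pointwise

private lemma aux_mem_sylow {G : Type*} [Group G] [Finite G] {p : ℕ} [Fact p.Prime]
    (hTI : ∀ Q₁ Q₂ : Sylow p G, (Q₁ : Subgroup G) ≠ Q₂ → (Q₁ : Subgroup G) ⊓ Q₂ = ⊥)
    (Q : Sylow p G) {w t : G} (hw : w ∈ Q) (hw1 : w ≠ 1)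
    (hc : Commute w t) (ht : orderOf t = p) : t ∈ Q := by
  -- zpowers w is a p-group
  have hwP : IsPGroup p (zpowers w : Subgroup G) := by
    obtain ⟨k, hk⟩ := (IsPGroup.iff_orderOf.mp Q.2) ⟨w, hw⟩
    rw [Subgroup.orderOf_mk] at hk
    exact IsPGroup.of_card (by rw [Nat.card_zpowers, hk])
  have htP : IsPGroup p (zpowers t : Subgroup G) :=
    IsPGroup.of_card (by rw [Nat.card_zpowers, ht, pow_one])
  have key : ∀ k : ℤ, t * w ^ k * t⁻¹ = w ^ k := by
    intro k
    rw [(hc.symm.zpow_right k).eq]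
    simp [mul_assoc]
  have hnorm : (zpowers t : Subgroup G) ≤ Subgroup.normalizer ((zpowers w : Subgroup G) : Set G) := by
    rw [zpowers_le]
    rw [Subgroup.mem_normalizer_iff]
    intro h
    constructor
    · intro hmem
      obtain ⟨k, hk⟩ := Subgroup.mem_zpowers_iff.mp hmem
      refine Subgroup.mem_zpowers_iff.mpr ⟨k, ?_⟩
      rw [← hk]
      exact (key k).symm
    · intro hmem
      obtain ⟨k, hk⟩ := Subgroup.mem_zpowers_iff.mp hmem
      have h1 : h = t⁻¹ * w ^ k * t := by rw [hk]; group
      refine Subgroup.mem_zpowers_iff.mpr ⟨k, ?_⟩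
      rw [h1, ((hc.symm.zpow_right k).inv_left).eq]
      simp [mul_assoc]
  have hsup : IsPGroup p ((zpowers t ⊔ zpowers w : Subgroup G)) :=
    IsPGroup.to_sup_of_normal_right' htP hwP hnorm
  obtain ⟨P, hP⟩ := hsup.exists_le_sylow
  have hwp : w ∈ P := hP (le_sup_right (α := Subgroup G) (mem_zpowers w))
  have htp : t ∈ P := hP (le_sup_left (α := Subgroup G) (mem_zpowers t))
  by_cases hPQ : (P : Subgroup G) = Q
  · have : t ∈ (P : Subgroup G) := htp
    rw [hPQ] at this
    exact this
  · exact absurd (hTI P Q hPQ ▸ (mem_inf.mpr ⟨hwp, hw⟩)) (by simpa using hw1)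

theorem not_dvd_card_centralizer_inter_of_TI {G : Type*} [Group G] [Finite G] (p : ℕ)
    [Fact p.Prime]
    (hTI : ∀ Q₁ Q₂ : Sylow p G, (Q₁ : Subgroup G) ≠ Q₂ → (Q₁ : Subgroup G) ⊓ Q₂ = ⊥)
    (Q : Sylow p G) (z x : G) (hz : z ∈ Q) (hz1 : z ≠ 1) (hx : x ∈ Q) (hx1 : x ≠ 1)
    (g : G) (hg : g ∉ Subgroup.normalizer ((Q : Subgroup G) : Set G)) :
    ¬ p ∣ Nat.card (Subgroup.centralizer {z} ⊓ Subgroup.centralizer {g⁻¹ * x * g} :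
      Subgroup G) := by
  intro hdvd
  obtain ⟨t₀, ht₀⟩ := exists_prime_orderOf_dvd_card' p hdvd
  set t : G := (t₀ : G) with htdef
  have ht : orderOf t = p := by rw [htdef, Subgroup.orderOf_coe, ht₀]
  have htmem := t₀.2
  rw [Subgroup.mem_inf] at htmem
  have hcz : Commute z t := (Subgroup.mem_centralizer_singleton_iff.mp htmem.1).symm
  have hcx : Commute (g⁻¹ * x * g) t :=
    (Subgroup.mem_centralizer_singleton_iff.mp htmem.2).symm
  -- t ∈ Q
  have htQ : t ∈ Q := aux_mem_sylow hTI Q hz hz1 hcz ht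
  -- t ∈ g⁻¹ • Q
  have hx' : g⁻¹ * x * g ∈ (g⁻¹ • Q : Sylow p G) := by
    have hco : ((g⁻¹ • Q : Sylow p G) : Subgroup G) = MulAut.conj g⁻¹ • (Q : Subgroup G) := by
      rw [Sylow.smul_def, Sylow.pointwise_smul_def]
    show g⁻¹ * x * g ∈ ((g⁻¹ • Q : Sylow p G) : Subgroup G)
    rw [hco, Subgroup.mem_pointwise_smul_iff_inv_smul_mem]
    simp [MulAut.smul_def, mul_assoc]
    exact hx
  have hx'1 : g⁻¹ * x * g ≠ 1 := by
    intro h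
    apply hx1
    have := congrArg (fun y => g * y * g⁻¹) h
    simpa [mul_assoc] using this
  have htQ' : t ∈ (g⁻¹ • Q : Sylow p G) := aux_mem_sylow hTI _ hx' hx'1 hcx ht
  have ht1 : t ≠ 1 := by
    intro h
    have := ht
    rw [h, orderOf_one] at this
    exact (Fact.out : p.Prime).ne_one this.symm
  by_cases hQQ : ((g⁻¹ • Q : Sylow p G) : Subgroup G) = Q
  · apply hg
    have : (g⁻¹ • Q : Sylow p G) = Q := Sylow.ext hQQ
    have hginv : g⁻¹ ∈ Subgroup.normalizer ((Q : Subgroup G) : Set G) := Sylow.smul_eq_iff_mem_normalizer.mp this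
    simpa using (Subgroup.normalizer ((Q : Subgroup G) : Set G)).inv_mem hginv
  · exact absurd (hTI _ Q hQQ ▸ (mem_inf.mpr ⟨htQ', htQ⟩)) (by simpa using ht1)
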